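/- The class of quasi-Gorenstein projective R-modules is closed under direct summands: if G = M ⊕ M' is quasi-Gorenstein projective, then M is quasi-Gorenstein projective. -/

import Mathlib

open CategoryTheory

universe u
variable {R : Type u} [Ring R]

/-- A module `Q` is quasi-projective if every homomorphism from `Q` to a quotient
of `Q` lifts to an endomorphism of `Q`. -/
def QuasiProjective (Q : ModuleCat.{u} R) : Prop :=
  ∀ (B : ModuleCat.{u} R) (g : Q ⟶ B), Function.Surjective g →
    ∀ f : Q ⟶ B, ∃ h : Q ⟶ Q, h ≫ g = f

/-- `M` is quasi-Gorenstein projective if it is a syzygy of an exact complex of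
projective modules (given by short exact sequences `0 → K (n+1) → P n → K n → 0`)
that remains exact under `Hom(-, Q)` for every quasi-projective module `Q`. -/
def QuasiGorensteinProjective (M : ModuleCat.{u} R) : Prop :=
  ∃ (K P : ℤ → ModuleCat.{u} R) (ι : ∀ n, K (n + 1) ⟶ P n) (π : ∀ n, P n ⟶ K n),
    (∀ n, Module.Projective R (P n)) ∧
    (∀ n, Function.Injective (ι n)) ∧
    (∀ n, Function.Surjective (π n)) ∧
    (∀ n, Function.Exact (ι n) (π n)) ∧
    (∀ n (Q : ModuleCat.{u} R), QuasiProjective Q →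
      ∀ f : K (n + 1) ⟶ Q, ∃ g : P n ⟶ Q, ι n ≫ g = f) ∧
    Nonempty (M ≅ K 0)

open CategoryTheory.Limits

/-- Operational `Ext¹(C,Q) = 0`: every short exact sequence `0 → Q → X → C → 0`
admits a retraction `X → Q`. -/
def GoodFor (C Q : ModuleCat.{u} R) : Prop :=
  ∀ (X : ModuleCat.{u} R) (j : Q →ₗ[R] X) (q : X →ₗ[R] C),
    Function.Injective j → Function.Surjective q → Function.Exact j q →
    ∃ r : X →ₗ[R] Q, r ∘ₗ j = LinearMap.id

theorem retraction_of_section {Q X C : ModuleCat.{u} R} (j : Q →ₗ[R] X) (q : X →ₗ[R] C)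
    (hj : Function.Injective j) (hex : Function.Exact j q)
    (s : C →ₗ[R] X) (hs : q ∘ₗ s = LinearMap.id) :
    ∃ r : X →ₗ[R] Q, r ∘ₗ j = LinearMap.id := by
  set t : X →ₗ[R] X := LinearMap.id - s ∘ₗ q with ht
  have hker : LinearMap.ker q = LinearMap.range j := LinearMap.exact_iff.mp hex
  have hrange : ∀ x, t x ∈ LinearMap.range j := by
    intro x
    rw [← hker, LinearMap.mem_ker]
    have h1 := LinearMap.congr_fun hs (q x)
    simp only [LinearMap.comp_apply, LinearMap.id_apply] at h1
    simp [ht, LinearMap.sub_apply, h1]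
  have e := LinearEquiv.ofInjective j hj
  refine ⟨(LinearEquiv.ofInjective j hj).symm.toLinearMap ∘ₗ
    t.codRestrict (LinearMap.range j) hrange, ?_⟩
  ext a
  simp only [LinearMap.comp_apply, LinearMap.codRestrict_apply, LinearMap.id_apply,
    LinearEquiv.coe_coe]
  have htj : t (j a) = j a := by
    have h0 : q (j a) = 0 := (hex (j a)).mpr ⟨a, rfl⟩
    simp [ht, LinearMap.sub_apply, h0]
  have : (⟨t (j a), hrange (j a)⟩ : LinearMap.range j) = LinearEquiv.ofInjective j hj a := by
    apply Subtype.ext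
    simpa [LinearEquiv.ofInjective_apply] using htj
  rw [show (t.codRestrict (LinearMap.range j) hrange) (j a) = ⟨t (j a), hrange (j a)⟩ from rfl,
    this, LinearEquiv.symm_apply_apply]
section helpers
variable {P C Y Q X W : Type u} [AddCommGroup P] [Module R P] [AddCommGroup C] [Module R C]
  [AddCommGroup Y] [Module R Y] [AddCommGroup Q] [Module R Q] [AddCommGroup X] [Module R X]
  [AddCommGroup W] [Module R W]

theorem factor_through_surjective (p : P →ₗ[R] C) (hp : Function.Surjective p)
    (θ : P →ₗ[R] Y) (h : LinearMap.ker p ≤ LinearMap.ker θ) :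
    ∃ σ : C →ₗ[R] Y, σ ∘ₗ p = θ := by
  refine ⟨(LinearMap.ker p).liftQ θ h ∘ₗ
    ((p.quotKerEquivOfSurjective hp).symm : C →ₗ[R] P ⧸ LinearMap.ker p), ?_⟩
  ext x
  have hmk : (p.quotKerEquivOfSurjective hp).symm (p x) = Submodule.Quotient.mk x := by
    rw [LinearEquiv.symm_apply_eq]
    simp [LinearMap.quotKerEquivOfSurjective, LinearMap.quotKerEquivRange_apply_mk]
  simp [LinearMap.comp_apply, hmk]

theorem factor_through_injective (j : Q →ₗ[R] X) (hj : Function.Injective j)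
    (ψ : W →ₗ[R] X) (h : ∀ w, ψ w ∈ LinearMap.range j) :
    ∃ f : W →ₗ[R] Q, j ∘ₗ f = ψ := by
  refine ⟨(LinearEquiv.ofInjective j hj).symm.toLinearMap ∘ₗ
    ψ.codRestrict (LinearMap.range j) h, ?_⟩
  ext w
  have : ∀ z : LinearMap.range j, j ((LinearEquiv.ofInjective j hj).symm z) = z.1 := by
    intro z
    conv_rhs => rw [← (LinearEquiv.ofInjective j hj).apply_symm_apply z]
    rfl
  simp [LinearMap.comp_apply, this]

end helpers

/-- If `0 → A → X → B → 0` is exact and `Ext¹(B,Q) = 0`, then every `f : A → Q`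
extends over `X`. -/
theorem good_extend {A X B Q : ModuleCat.{u} R} (i : A →ₗ[R] X) (p : X →ₗ[R] B)
    (hi : Function.Injective i) (hp : Function.Surjective p) (hex : Function.Exact i p)
    (hB : GoodFor B Q) (f : A →ₗ[R] Q) : ∃ g : X →ₗ[R] Q, g ∘ₗ i = f := by
  classical
  set D : Submodule R (↑Q × ↑X) := LinearMap.range (LinearMap.prod f (-i)) with hD
  set Y : ModuleCat.{u} R := ModuleCat.of R ((↑Q × ↑X) ⧸ D) with hY
  set jY : (Q : Type u) →ₗ[R] Y := D.mkQ ∘ₗ LinearMap.inl R ↑Q ↑X with hjY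
  have hDle : D ≤ LinearMap.ker (p ∘ₗ LinearMap.snd R ↑Q ↑X) := by
    rintro x ⟨a, rfl⟩
    have : p (i a) = 0 := (hex (i a)).mpr ⟨a, rfl⟩
    simp [LinearMap.mem_ker, LinearMap.prod_apply, this]
  set qY : (Y : Type u) →ₗ[R] B := D.liftQ (p ∘ₗ LinearMap.snd R ↑Q ↑X) hDle with hqY
  have hjYinj : Function.Injective jY := by
    intro a a' haa
    have : ((a - a', 0) : ↑Q × ↑X) ∈ D := by
      rw [← Submodule.Quotient.mk_eq_zero]
      have : jY (a - a') = 0 := by rw [map_sub, haa, sub_self]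
      exact this
    obtain ⟨a'', ha''⟩ := this
    have h2 : -(i a'') = 0 := congrArg Prod.snd ha''
    have h3 : a'' = 0 := hi (by simpa using h2)
    have h4 : f a'' = a - a' := congrArg Prod.fst ha''
    rw [h3, map_zero] at h4
    exact sub_eq_zero.mp h4.symm
  have hqYsurj : Function.Surjective qY := by
    intro b
    obtain ⟨x, hx⟩ := hp b
    exact ⟨D.mkQ (0, x), hx⟩
  have hexY : Function.Exact jY qY := by
    intro y
    obtain ⟨⟨c, x⟩, rfl⟩ := D.mkQ_surjective y
    constructor
    · intro h0
      have hpx : p x = 0 := h0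
      obtain ⟨a', ha'⟩ := (hex x).mp hpx
      refine ⟨c + f a', ?_⟩
      have hmem : ((c + f a', 0) : ↑Q × ↑X) - (c, x) ∈ D := ⟨a', by simp [← ha', Prod.ext_iff]⟩
      show D.mkQ ((c + f a' : ↑Q), (0 : ↑X)) = D.mkQ (c, x)
      rw [Submodule.mkQ_apply, Submodule.mkQ_apply, Submodule.Quotient.eq]
      exact hmem
    · rintro ⟨a, ha⟩
      rw [← ha]
      show qY (D.mkQ ((a : ↑Q), (0 : ↑X))) = 0
      exact map_zero p
  obtain ⟨r, hr⟩ := hB Y jY qY hjYinj hqYsurj hexY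
  refine ⟨r ∘ₗ D.mkQ ∘ₗ LinearMap.inr R ↑Q ↑X, ?_⟩
  ext a
  have hmem : ((0, i a) : ↑Q × ↑X) - (f a, 0) ∈ D := ⟨-a, by simp [Prod.ext_iff]⟩
  have heq : D.mkQ ((0 : ↑Q), i a) = D.mkQ (f a, (0 : ↑X)) := by
    rw [Submodule.mkQ_apply, Submodule.mkQ_apply, Submodule.Quotient.eq]
    exact hmem
  show r (D.mkQ ((0 : ↑Q), i a)) = f a
  rw [heq]
  have h5 := LinearMap.congr_fun hr (f a)
  simp only [LinearMap.comp_apply, LinearMap.id_apply] at h5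
  exact h5

/-- Converse direction: the lifting property along `0 → A → P → C → 0` with `P`
projective gives `Ext¹(C,Q) = 0`. -/
theorem good_of_lift {A P C Q : ModuleCat.{u} R} (i : A →ₗ[R] P) (p : P →ₗ[R] C)
    (hproj : Module.Projective R P) (hp : Function.Surjective p) (hex : Function.Exact i p)
    (hlift : ∀ f : A →ₗ[R] Q, ∃ g : P →ₗ[R] Q, g ∘ₗ i = f) : GoodFor C Q := by
  intro X j q hj hq hexq
  obtain ⟨ψ, hψ⟩ := Module.projective_lifting_property q p hq
  obtain ⟨f, hf⟩ := factor_through_injective j hj (ψ ∘ₗ i) (by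
    intro w
    have : q (ψ (i w)) = 0 := by
      rw [show q (ψ (i w)) = (q ∘ₗ ψ) (i w) from rfl, hψ]
      exact (hex (i w)).mpr ⟨w, rfl⟩
    simpa using (hexq (ψ (i w))).mp this)
  obtain ⟨g, hg⟩ := hlift f
  set θ : (P : Type u) →ₗ[R] X := ψ - j ∘ₗ g with hθ
  obtain ⟨σ, hσ⟩ := factor_through_surjective p hp θ (by
    intro x hx
    rw [LinearMap.exact_iff.mp hex] at hx
    obtain ⟨a, rfl⟩ := hx
    have h1 : ψ (i a) = j (f a) := LinearMap.congr_fun hf.symm a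
    have h2 : g (i a) = f a := LinearMap.congr_fun hg a
    simp [LinearMap.mem_ker, hθ, LinearMap.sub_apply, h1, h2])
  have hsec : q ∘ₗ σ = LinearMap.id := by
    ext c
    obtain ⟨x, rfl⟩ := hp c
    have h1 : σ (p x) = θ x := LinearMap.congr_fun hσ x
    have h2 : q (ψ x) = p x := LinearMap.congr_fun hψ x
    have h3 : q (j (g x)) = 0 := (hexq (j (g x))).mpr ⟨g x, rfl⟩
    simp [h1, hθ, LinearMap.sub_apply, h2, h3]
  exact retraction_of_section j q hj hexq σ hsec

/-- `GoodFor · Q` is closed under retracts. -/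
theorem good_retract {C D' Q : ModuleCat.{u} R} (u : C →ₗ[R] D') (v : D' →ₗ[R] C)
    (huv : v ∘ₗ u = LinearMap.id) (hD : GoodFor D' Q) : GoodFor C Q := by
  intro X j q hj hq hexq
  set W : Submodule R (↑X × ↑D') :=
    LinearMap.ker ((q ∘ₗ LinearMap.fst R ↑X ↑D') - (v ∘ₗ LinearMap.snd R ↑X ↑D')) with hW
  have hj0 : ∀ a, q (j a) = 0 := fun a => (hexq (j a)).mpr ⟨a, rfl⟩
  have memW : ∀ z : ↑X × ↑D', z ∈ W ↔ q z.1 = v z.2 := by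
    intro z
    simp [hW, LinearMap.mem_ker, sub_eq_zero]
  have hjWmem : ∀ a, ((j a, (0 : ↑D')) : ↑X × ↑D') ∈ W := by
    intro a
    rw [memW]
    simp [hj0 a]
  set jW : (Q : Type u) →ₗ[R] ModuleCat.of R ↥W :=
    LinearMap.codRestrict W (LinearMap.prod j (0 : (Q : Type u) →ₗ[R] D'))
      (fun a => by simpa using hjWmem a) with hjW
  set qW : (ModuleCat.of R ↥W : Type u) →ₗ[R] D' :=
    LinearMap.snd R ↑X ↑D' ∘ₗ W.subtype with hqW
  have hjWval : ∀ a, (jW a).val = ((j a, (0 : ↑D')) : ↑X × ↑D') := fun a => rfl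
  have hjWinj : Function.Injective jW := by
    intro a a' haa
    have h2 : ((j a, (0 : ↑D')) : ↑X × ↑D') = (j a', (0 : ↑D')) := by
      rw [← hjWval a, ← hjWval a', haa]
    exact hj (congrArg Prod.fst h2)
  have hqWsurj : Function.Surjective qW := by
    intro d
    obtain ⟨x, hx⟩ := hq (v d)
    exact ⟨⟨(x, d), (memW _).mpr hx⟩, rfl⟩
  have hexW : Function.Exact jW qW := by
    intro w
    constructor
    · intro h0
      have hw2 : (w.val).2 = 0 := h0
      have hw1 : q (w.val).1 = 0 := by
        rw [(memW w.val).mp w.2, hw2, map_zero]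
      obtain ⟨a, ha⟩ := (hexq (w.val).1).mp hw1
      refine ⟨a, Subtype.ext ?_⟩
      rw [hjWval a]
      exact Prod.ext ha hw2.symm
    · rintro ⟨a, rfl⟩
      rfl
  obtain ⟨rW, hrW⟩ := hD (ModuleCat.of R ↥W) jW qW hjWinj hqWsurj hexW
  have hcodmem : ∀ x : ↑X, ((x, u (q x)) : ↑X × ↑D') ∈ W := by
    intro x
    rw [memW]
    exact (LinearMap.congr_fun huv (q x)).symm
  set cod : (X : Type u) →ₗ[R] ModuleCat.of R ↥W :=
    LinearMap.codRestrict W (LinearMap.prod LinearMap.id (u ∘ₗ q))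
      (fun x => by simpa using hcodmem x) with hcod
  refine ⟨rW ∘ₗ cod, ?_⟩
  ext a
  have hval : cod (j a) = jW a := by
    apply Subtype.ext
    show ((j a, u (q (j a))) : ↑X × ↑D') = (jW a).val
    rw [hjWval a, hj0 a, map_zero]
  show rW (cod (j a)) = a
  rw [hval]
  exact LinearMap.congr_fun hrW a

/-- `GoodFor · Q` is closed under extensions. -/
theorem good_ext {C' C C'' Q : ModuleCat.{u} R} (c' : C' →ₗ[R] C) (p'' : C →ₗ[R] C'')
    (hc' : Function.Injective c') (hp'' : Function.Surjective p'')
    (hexC : Function.Exact c' p'')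
    (h1 : GoodFor C' Q) (h2 : GoodFor C'' Q) : GoodFor C Q := by
  intro X j q hj hq hexq
  set W : Submodule R ↑X := LinearMap.ker (p'' ∘ₗ q) with hW
  have hj0 : ∀ a, q (j a) = 0 := fun a => (hexq (j a)).mpr ⟨a, rfl⟩
  set j1 : (Q : Type u) →ₗ[R] ModuleCat.of R ↥W :=
    LinearMap.codRestrict W j (fun a => by simp [hW, LinearMap.mem_ker, hj0 a]) with hj1
  have hj1val : ∀ a, (j1 a).val = j a := fun a => rfl
  obtain ⟨q1, hq1⟩ := factor_through_injective c' hc' (q ∘ₗ W.subtype) (by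
    intro w
    have h3 : p'' (q w.val) = 0 := w.2
    exact (hexC (q w.val)).mp h3)
  have hj1inj : Function.Injective j1 := by
    intro a a' haa
    exact hj (congrArg Subtype.val haa)
  have hcq : ∀ w : ↥W, c' (q1 w) = q w.val := fun w => LinearMap.congr_fun hq1 w
  have hq1surj : Function.Surjective q1 := by
    intro y
    obtain ⟨x, hx⟩ := hq (c' y)
    have hxW : x ∈ W := by
      have h3 : p'' (c' y) = 0 := (hexC (c' y)).mpr ⟨y, rfl⟩
      simp [hW, LinearMap.mem_ker, hx, h3]
    refine ⟨⟨x, hxW⟩, hc' ?_⟩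
    rw [hcq]
    exact hx
  have hexW : Function.Exact j1 q1 := by
    intro w
    constructor
    · intro h0
      have h4 : q w.val = 0 := by rw [← hcq, h0, map_zero]
      obtain ⟨a, ha⟩ := (hexq _).mp h4
      refine ⟨a, Subtype.ext ?_⟩
      rw [hj1val a]
      exact ha
    · rintro ⟨a, rfl⟩
      apply hc'
      rw [hcq, map_zero, hj1val a]
      exact hj0 a
  obtain ⟨r', hr'⟩ := h1 (ModuleCat.of R ↥W) j1 q1 hj1inj hq1surj hexW
  set sub : (ModuleCat.of R ↥W : Type u) →ₗ[R] X := W.subtype with hsub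
  set t : (ModuleCat.of R ↥W : Type u) →ₗ[R] X := sub - j ∘ₗ r' with ht
  have htval : ∀ w : ↥W, t w = w.val - j (r' w) := fun w => rfl
  set Xb : ModuleCat.{u} R := ModuleCat.of R (↑X ⧸ LinearMap.range t) with hXb
  set jb : (Q : Type u) →ₗ[R] Xb := (LinearMap.range t).mkQ ∘ₗ j with hjb
  have hrle : LinearMap.range t ≤ LinearMap.ker (p'' ∘ₗ q) := by
    rintro x ⟨w, rfl⟩
    have h1' : p'' (q w.val) = 0 := w.2
    rw [LinearMap.mem_ker]
    show p'' (q (t w)) = 0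
    rw [htval w]
    simp [map_sub, h1', hj0]
  set qb : (Xb : Type u) →ₗ[R] C'' := (LinearMap.range t).liftQ (p'' ∘ₗ q) hrle with hqb
  have hjbinj : Function.Injective jb := by
    intro a a' haa
    have hsubm : j (a - a') ∈ LinearMap.range t := by
      rw [← Submodule.Quotient.mk_eq_zero]
      have h4 : jb (a - a') = 0 := by rw [map_sub, haa, sub_self]
      exact h4
    obtain ⟨w, hw⟩ := hsubm
    have hw' : w.val = j ((a - a') + r' w) := by
      have h4 : w.val - j (r' w) = j (a - a') := by rw [← htval w, hw]
      rw [map_add, ← h4]; abel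
    have hwj1 : w = j1 ((a - a') + r' w) := Subtype.ext (by rw [hj1val]; exact hw')
    have h5 : r' w = (a - a') + r' w := by
      conv_lhs => rw [hwj1]
      exact LinearMap.congr_fun hr' _
    have h0 : a - a' = 0 := by
      have h6 := congrArg (fun z => z - r' w) h5
      simpa using h6.symm
    exact sub_eq_zero.mp h0
  have hqbsurj : Function.Surjective qb := by
    intro z
    obtain ⟨c, hc⟩ := hp'' z
    obtain ⟨x, hx⟩ := hq c
    refine ⟨(LinearMap.range t).mkQ x, ?_⟩
    show p'' (q x) = z
    rw [hx, hc]
  have hexb : Function.Exact jb qb := by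
    intro y
    obtain ⟨x, rfl⟩ := (LinearMap.range t).mkQ_surjective y
    constructor
    · intro h0
      have hxW : x ∈ W := by
        have h4 : p'' (q x) = 0 := h0
        simpa [hW, LinearMap.mem_ker] using h4
      refine ⟨r' ⟨x, hxW⟩, ?_⟩
      have hmem : x - j (r' ⟨x, hxW⟩) ∈ LinearMap.range t := ⟨⟨x, hxW⟩, rfl⟩
      show (LinearMap.range t).mkQ (j (r' ⟨x, hxW⟩)) = (LinearMap.range t).mkQ x
      rw [Submodule.mkQ_apply, Submodule.mkQ_apply, Submodule.Quotient.eq]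
      simpa using Submodule.neg_mem _ hmem
    · rintro ⟨a, ha⟩
      rw [← ha]
      show p'' (q (j a)) = 0
      rw [hj0 a, map_zero]
  obtain ⟨r'', hr''⟩ := h2 Xb jb qb hjbinj hqbsurj hexb
  exact ⟨r'' ∘ₗ (LinearMap.range t).mkQ, by
    ext a
    exact LinearMap.congr_fun hr'' a⟩

/-- Projective modules are quasi-projective. -/
theorem quasiProjective_of_projective {P : ModuleCat.{u} R} (h : Module.Projective R P) :
    QuasiProjective P := by
  intro B g hg f
  obtain ⟨h', hh⟩ := Module.projective_lifting_property (g.hom : (P : Type u) →ₗ[R] B)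
    (f.hom : (P : Type u) →ₗ[R] B) hg
  refine ⟨ModuleCat.ofHom h', ?_⟩
  ext x
  exact LinearMap.congr_fun hh x

/-- A short exact sequence `0 → A → X → B → 0` of modules. -/
structure SESData (A X B : ModuleCat.{u} R) where
  i : (A : Type u) →ₗ[R] X
  p : (X : Type u) →ₗ[R] B
  inj : Function.Injective i
  surj : Function.Surjective p
  exact : Function.Exact i p

/-- Output of the (co)horseshoe constructions. -/
structure HSOut (NewMid : ModuleCat.{u} R) (X A1 B1 : ModuleCat.{u} R) where
  N : ModuleCat.{u} R
  main : SESData N NewMid X        -- for the right version; left version uses `coMain`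
  ses : SESData A1 N B1

structure HSOutL (NewMid : ModuleCat.{u} R) (X A1 B1 : ModuleCat.{u} R) where
  N : ModuleCat.{u} R
  main : SESData X NewMid N
  ses : SESData A1 N B1

/-- Horseshoe lemma, projective-resolution direction. -/
noncomputable def hsRight {A X B A1 PA B1 PB : ModuleCat.{u} R}
    (s : SESData A X B) (sA : SESData A1 PA A) (sB : SESData B1 PB B)
    (hPB : Module.Projective R (PB : Type u)) :
    HSOut (ModuleCat.of R (↑PA × ↑PB)) X A1 B1 := by
  have hv := Module.projective_lifting_property (h := hPB) s.p sB.p s.surj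
  set v : (PB : Type u) →ₗ[R] X := hv.choose with hvdef
  have hvspec : s.p ∘ₗ v = sB.p := hv.choose_spec
  have hvs : ∀ r, s.p (v r) = sB.p r := fun r => LinearMap.congr_fun hvspec r
  set q : (↑PA × ↑PB) →ₗ[R] (X : Type u) := LinearMap.coprod (s.i ∘ₗ sA.p) v with hqdef
  have hqval : ∀ z : ↑PA × ↑PB, q z = s.i (sA.p z.1) + v z.2 := fun z => rfl
  have hqsurj : Function.Surjective q := by
    intro x
    obtain ⟨r, hr⟩ := sB.surj (s.p x)
    have h0 : s.p (x - v r) = 0 := by rw [map_sub, hvs, hr, sub_self]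
    obtain ⟨a, ha⟩ := (s.exact _).mp h0
    obtain ⟨pa, hpa⟩ := sA.surj a
    refine ⟨(pa, r), ?_⟩
    rw [hqval, hpa, ha]
    abel
  set N : ModuleCat.{u} R := ModuleCat.of R ↥(LinearMap.ker q) with hN
  set iN : (N : Type u) →ₗ[R] ModuleCat.of R (↑PA × ↑PB) := (LinearMap.ker q).subtype with hiN
  have hexN : Function.Exact iN q := by
    intro y
    constructor
    · intro h0
      exact ⟨⟨y, h0⟩, rfl⟩
    · rintro ⟨w, rfl⟩
      exact w.2
  have hiA0 : ∀ a1, sA.p (sA.i a1) = 0 := fun a1 => (sA.exact _).mpr ⟨a1, rfl⟩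
  have hαmem : ∀ a1 : (A1 : Type u), ((sA.i a1, (0 : ↑PB)) : ↑PA × ↑PB) ∈ LinearMap.ker q := by
    intro a1
    rw [LinearMap.mem_ker, hqval]
    simp [hiA0 a1]
  set α : (A1 : Type u) →ₗ[R] N :=
    LinearMap.codRestrict (LinearMap.ker q)
      (LinearMap.prod sA.i (0 : (A1 : Type u) →ₗ[R] PB))
      (fun a1 => by simpa using hαmem a1) with hα
  have hαval : ∀ a1, (α a1).val = ((sA.i a1, (0 : ↑PB)) : ↑PA × ↑PB) := fun _ => rfl
  have hαinj : Function.Injective α := by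
    intro a b hab
    have := congrArg (fun w => (Subtype.val w).1) hab
    exact sA.inj this
  have hsnd : ∀ w : ↥(LinearMap.ker q), (w.val).2 ∈ LinearMap.range sB.i := by
    intro w
    have h0 : q w.val = 0 := w.2
    have h1 : s.p (q w.val) = 0 := by rw [h0, map_zero]
    rw [hqval] at h1
    have h2 : s.p (s.i (sA.p (w.val).1)) = 0 := (s.exact _).mpr ⟨_, rfl⟩
    rw [map_add, h2, zero_add, hvs] at h1
    exact (sB.exact _).mp h1
  have hβex := factor_through_injective sB.i sB.inj
    (LinearMap.snd R ↑PA ↑PB ∘ₗ (LinearMap.ker q).subtype) (fun w => hsnd w)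
  set β := hβex.choose with hβdef
  have hβ : sB.i ∘ₗ β = LinearMap.snd R ↑PA ↑PB ∘ₗ (LinearMap.ker q).subtype := hβex.choose_spec
  have hβval : ∀ w : ↥(LinearMap.ker q), sB.i (β w) = (w.val).2 :=
    fun w => LinearMap.congr_fun hβ w
  have hβsurj : Function.Surjective β := by
    intro b1
    have h0 : s.p (v (sB.i b1)) = 0 := by
      rw [hvs]
      exact (sB.exact _).mpr ⟨b1, rfl⟩
    obtain ⟨a, ha⟩ := (s.exact _).mp h0
    obtain ⟨pa, hpa⟩ := sA.surj a
    have hmem : ((-pa, sB.i b1) : ↑PA × ↑PB) ∈ LinearMap.ker q := by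
      rw [LinearMap.mem_ker, hqval]
      simp only [map_neg]
      rw [hpa, ha]
      abel
    refine ⟨⟨_, hmem⟩, sB.inj ?_⟩
    rw [hβval]
  have hexαβ : Function.Exact α β := by
    intro w
    constructor
    · intro h0
      have h2 : (w.val).2 = 0 := by
        rw [← hβval w, h0, map_zero]
      have h3 : q w.val = 0 := w.2
      rw [hqval, h2, map_zero, add_zero] at h3
      have h4 : sA.p (w.val).1 = 0 := s.inj (by rw [h3, map_zero])
      obtain ⟨a1, ha1⟩ := (sA.exact _).mp h4
      refine ⟨a1, Subtype.ext ?_⟩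
      rw [hαval]
      exact Prod.ext ha1 h2.symm
    · rintro ⟨a1, rfl⟩
      apply sB.inj
      rw [hβval, map_zero, hαval]
  exact ⟨N, ⟨iN, q, Subtype.val_injective, hqsurj, hexN⟩, ⟨α, β, hαinj, hβsurj, hexαβ⟩⟩

/-- Horseshoe lemma, coresolution direction. -/
noncomputable def hsLeft {A X B A1 PA B1 PB : ModuleCat.{u} R}
    (s : SESData A X B) (cosA : SESData A PA A1) (cosB : SESData B PB B1)
    (u : (X : Type u) →ₗ[R] PA) (hu : u ∘ₗ s.i = cosA.i) :
    HSOutL (ModuleCat.of R (↑PA × ↑PB)) X A1 B1 := by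
  have hus : ∀ a, u (s.i a) = cosA.i a := fun a => LinearMap.congr_fun hu a
  set j : (X : Type u) →ₗ[R] ModuleCat.of R (↑PA × ↑PB) :=
    LinearMap.prod u (cosB.i ∘ₗ s.p) with hjdef
  have hjval : ∀ x, j x = ((u x, cosB.i (s.p x)) : ↑PA × ↑PB) := fun _ => rfl
  have hps0 : ∀ a, s.p (s.i a) = 0 := fun a => (s.exact _).mpr ⟨a, rfl⟩
  have hjinj : Function.Injective j := by
    intro x x' hxx
    rw [← sub_eq_zero]
    set y := x - x' with hy
    have h0 : j y = 0 := by rw [hy, map_sub, hxx, sub_self]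
    have h1 : cosB.i (s.p y) = 0 := congrArg Prod.snd (h0 : _ = ((0 : ↑PA), (0 : ↑PB)))
    have h2 : s.p y = 0 := cosB.inj (by rw [h1, map_zero])
    obtain ⟨a, ha⟩ := (s.exact _).mp h2
    have h3 : u y = 0 := congrArg Prod.fst (h0 : _ = ((0 : ↑PA), (0 : ↑PB)))
    rw [← ha, hus] at h3
    have h4 : a = 0 := cosA.inj (by rw [h3, map_zero])
    rw [← ha, h4, map_zero]
  set Dj := LinearMap.range j with hDj
  set N : ModuleCat.{u} R := ModuleCat.of R ((↑PA × ↑PB) ⧸ Dj) with hN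
  set c : (ModuleCat.of R (↑PA × ↑PB) : Type u) →ₗ[R] N := Dj.mkQ with hc
  have hexjc : Function.Exact j c := by
    intro y
    constructor
    · intro h0
      have : y ∈ Dj := by rwa [← Submodule.Quotient.mk_eq_zero]
      obtain ⟨x, hx⟩ := this
      exact ⟨x, hx⟩
    · rintro ⟨x, rfl⟩
      exact (Submodule.Quotient.mk_eq_zero Dj).mpr ⟨x, rfl⟩
  set κ : (PA : Type u) →ₗ[R] N := c ∘ₗ LinearMap.inl R ↑PA ↑PB with hκ
  have hκker : LinearMap.ker cosA.p ≤ LinearMap.ker κ := by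
    intro x hx
    rw [LinearMap.mem_ker] at hx ⊢
    obtain ⟨a, ha⟩ := (cosA.exact _).mp hx
    have h1 : ((x, (0 : ↑PB)) : ↑PA × ↑PB) = j (s.i a) := by
      rw [hjval, hps0, map_zero, ← ha, hus]
    show Dj.mkQ ((x, (0 : ↑PB)) : ↑PA × ↑PB) = 0
    rw [Submodule.mkQ_apply, Submodule.Quotient.mk_eq_zero, h1]
    exact ⟨s.i a, rfl⟩
  have hαex := factor_through_surjective cosA.p cosA.surj κ hκker
  set α := hαex.choose with hαdef
  have hαfac : α ∘ₗ cosA.p = κ := hαex.choose_spec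
  have hαval : ∀ pa, α (cosA.p pa) = Dj.mkQ ((pa, (0 : ↑PB)) : ↑PA × ↑PB) :=
    fun pa => LinearMap.congr_fun hαfac pa
  have hαinj : Function.Injective α := by
    intro a1 a1' ha
    rw [← sub_eq_zero]
    obtain ⟨pa, hpa⟩ := cosA.surj (a1 - a1')
    have h0 : α (a1 - a1') = 0 := by rw [map_sub, ha, sub_self]
    rw [← hpa] at h0 ⊢
    rw [hαval] at h0
    rw [Submodule.mkQ_apply, Submodule.Quotient.mk_eq_zero] at h0
    obtain ⟨x, hx⟩ := h0
    have h1 : cosB.i (s.p x) = 0 := congrArg Prod.snd hx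
    have h2 : s.p x = 0 := cosB.inj (by rw [h1, map_zero])
    obtain ⟨a, ha'⟩ := (s.exact _).mp h2
    have h3 : u x = pa := congrArg Prod.fst hx
    have h4 : pa = cosA.i a := by rw [← h3, ← ha', hus]
    rw [h4]
    exact (cosA.exact _).mpr ⟨a, rfl⟩
  have hβker : Dj ≤ LinearMap.ker (cosB.p ∘ₗ LinearMap.snd R ↑PA ↑PB) := by
    rintro z ⟨x, rfl⟩
    rw [LinearMap.mem_ker]
    show cosB.p (cosB.i (s.p x)) = 0
    exact (cosB.exact _).mpr ⟨_, rfl⟩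
  set β : (N : Type u) →ₗ[R] B1 := Dj.liftQ (cosB.p ∘ₗ LinearMap.snd R ↑PA ↑PB) hβker with hβ
  have hβval : ∀ z : ↑PA × ↑PB, β (Dj.mkQ z) = cosB.p z.2 := fun z => rfl
  have hβsurj : Function.Surjective β := by
    intro b1
    obtain ⟨pb, hpb⟩ := cosB.surj b1
    exact ⟨Dj.mkQ ((0 : ↑PA), pb), by rw [hβval]; exact hpb⟩
  have hexαβ : Function.Exact α β := by
    intro y
    obtain ⟨⟨pa, pb⟩, rfl⟩ := Dj.mkQ_surjective y
    constructor
    · intro h0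
      rw [hβval] at h0
      obtain ⟨b, hb⟩ := (cosB.exact _).mp h0
      obtain ⟨x, hx⟩ := s.surj b
      refine ⟨cosA.p (pa - u x), ?_⟩
      rw [hαval]
      rw [Submodule.mkQ_apply, Submodule.mkQ_apply, Submodule.Quotient.eq]
      refine ⟨-x, ?_⟩
      have hcb : cosB.i (s.p x) = pb := by rw [hx, hb]
      have hsub : ((pa - u x, (0 : ↑PB)) : ↑PA × ↑PB) - ((pa, pb) : ↑PA × ↑PB)
          = (-(u x), -pb) := by
        rw [Prod.mk_sub_mk]
        refine Prod.ext ?_ ?_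
        · show pa - u x - pa = -(u x); abel
        · show (0 : ↑PB) - pb = -pb; simp
      rw [hsub]
      calc j (-x) = ((u (-x), cosB.i (s.p (-x))) : ↑PA × ↑PB) := hjval (-x)
        _ = (-(u x), -pb) := by rw [map_neg, map_neg, map_neg, hcb]
    · rintro ⟨a1, ha⟩
      rw [← ha]
      obtain ⟨pa', hpa'⟩ := cosA.surj a1
      rw [← hpa', hαval, hβval]
      exact map_zero cosB.p
  exact ⟨N, ⟨j, c, hjinj, Dj.mkQ_surjective, hexjc⟩, ⟨α, β, hαinj, hβsurj, hexαβ⟩⟩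

/-- All data extracted from a quasi-Gorenstein projective module `K 0 ≅ M ⊞ M'`. -/
structure GSetup where
  M : ModuleCat.{u} R
  M' : ModuleCat.{u} R
  Km : ℤ → ModuleCat.{u} R
  Pm : ℤ → ModuleCat.{u} R
  sKP : ∀ n : ℤ, SESData (Km (n + 1)) (Pm n) (Km n)
  projP : ∀ n, Module.Projective R (Pm n : Type u)
  goodK : ∀ (n : ℤ) (Q : ModuleCat.{u} R), QuasiProjective Q → GoodFor (Km n) Q
  goodM : ∀ Q : ModuleCat.{u} R, QuasiProjective Q → GoodFor M Q
  goodM' : ∀ Q : ModuleCat.{u} R, QuasiProjective Q → GoodFor M' Q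
  eM : (M : Type u) →ₗ[R] Km 0
  rM : (Km 0 : Type u) →ₗ[R] M
  eM' : (M' : Type u) →ₗ[R] Km 0
  rM' : (Km 0 : Type u) →ₗ[R] M'
  hrae : ∀ m, rM (eM m) = m
  hrbe : ∀ m, rM' (eM' m) = m
  hrab : ∀ m, rM (eM' m) = 0
  hrba : ∀ m, rM' (eM m) = 0
  htot : ∀ k, eM (rM k) + eM' (rM' k) = k

variable (S : @GSetup R _)

/-- Half of the base of the rightward tower. -/
structure RBaseHalf (Ma Mb : ModuleCat.{u} R) where
  NZ : ModuleCat.{u} R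
  Pi : ModuleCat.{u} R
  projPi : Module.Projective R (Pi : Type u)
  cover : SESData NZ Pi Ma
  inv : SESData (S.Km 1) NZ Mb

noncomputable def rHalf (Ma Mb : ModuleCat.{u} R)
    (ea : (Ma : Type u) →ₗ[R] S.Km 0) (ra : (S.Km 0 : Type u) →ₗ[R] Ma)
    (eb : (Mb : Type u) →ₗ[R] S.Km 0) (rb : (S.Km 0 : Type u) →ₗ[R] Mb)
    (h1 : ∀ m, ra (ea m) = m) (h2 : ∀ m, rb (eb m) = m)
    (h3 : ∀ m, ra (eb m) = 0)
    (htot : ∀ k, ea (ra k) + eb (rb k) = k) :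
    RBaseHalf S Ma Mb := by
  set s0 := S.sKP 0 with hs0
  set q0 : (S.Pm 0 : Type u) →ₗ[R] Ma := ra ∘ₗ s0.p with hq0
  have hq0val : ∀ x, q0 x = ra (s0.p x) := fun _ => rfl
  have hq0surj : Function.Surjective q0 := by
    intro m
    obtain ⟨x, hx⟩ := s0.surj (ea m)
    exact ⟨x, by rw [hq0val, hx, h1]⟩
  have hps0 : ∀ a, s0.p (s0.i a) = 0 := fun a => (s0.exact _).mpr ⟨a, rfl⟩
  have hmemi : ∀ a, s0.i a ∈ LinearMap.ker q0 := by
    intro a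
    rw [LinearMap.mem_ker, hq0val, hps0, map_zero]
  set ii : (S.Km 1 : Type u) →ₗ[R] ModuleCat.of R ↥(LinearMap.ker q0) :=
    LinearMap.codRestrict (LinearMap.ker q0) s0.i hmemi with hii
  have hiival : ∀ a, (ii a).val = s0.i a := fun _ => rfl
  set pp : (ModuleCat.of R ↥(LinearMap.ker q0) : Type u) →ₗ[R] Mb :=
    rb ∘ₗ s0.p ∘ₗ (LinearMap.ker q0).subtype with hpp
  have hppval : ∀ w, pp w = rb (s0.p w.val) := fun _ => rfl
  refine ⟨ModuleCat.of R ↥(LinearMap.ker q0), S.Pm 0, S.projP 0,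
    ⟨(LinearMap.ker q0).subtype, q0, Subtype.val_injective, hq0surj, ?_⟩,
    ⟨ii, pp, ?_, ?_, ?_⟩⟩
  · intro y
    constructor
    · intro h0
      exact ⟨⟨y, h0⟩, rfl⟩
    · rintro ⟨w, rfl⟩
      exact w.2
  · intro a a' haa
    exact s0.inj (by rw [← hiival a, ← hiival a', haa])
  · intro m
    obtain ⟨x, hx⟩ := s0.surj (eb m)
    have hxk : x ∈ LinearMap.ker q0 := by
      rw [LinearMap.mem_ker, hq0val, hx, h3]
    exact ⟨⟨x, hxk⟩, by rw [hppval, hx, h2]⟩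
  · intro w
    constructor
    · intro h0
      have hw0 : ra (s0.p w.val) = 0 := w.2
      have hw1 : rb (s0.p w.val) = 0 := h0
      have hw2 : s0.p w.val = 0 := by
        have := htot (s0.p w.val)
        rw [hw0, hw1, map_zero, map_zero, add_zero] at this
        exact this.symm
      obtain ⟨a, ha⟩ := (s0.exact _).mp hw2
      refine ⟨a, Subtype.ext ?_⟩
      rw [hiival]
      exact ha
    · rintro ⟨a, rfl⟩
      rw [hppval, hiival, hps0, map_zero]

/-- Half of the base of the leftward tower. -/
structure LBaseHalf (Ma Mb : ModuleCat.{u} R) where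
  NY : ModuleCat.{u} R
  Th : ModuleCat.{u} R
  projTh : Module.Projective R (Th : Type u)
  cov : SESData Ma Th NY
  inv : SESData Mb NY (S.Km (Int.negSucc 0))

noncomputable def lHalf (Ma Mb : ModuleCat.{u} R)
    (ea : (Ma : Type u) →ₗ[R] S.Km 0) (ra : (S.Km 0 : Type u) →ₗ[R] Ma)
    (eb : (Mb : Type u) →ₗ[R] S.Km 0) (rb : (S.Km 0 : Type u) →ₗ[R] Mb)
    (h1 : ∀ m, ra (ea m) = m) (h2 : ∀ m, rb (eb m) = m)
    (h4 : ∀ m, rb (ea m) = 0)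
    (htot : ∀ k, ea (ra k) + eb (rb k) = k) :
    LBaseHalf S Ma Mb := by
  set sL : SESData (S.Km (Int.negSucc 0 + 1)) (S.Pm (Int.negSucc 0)) (S.Km (Int.negSucc 0)) :=
    S.sKP (Int.negSucc 0) with hsL
  have hinj : Function.Injective (sL.i ∘ₗ (ea : (Ma : Type u) →ₗ[R] S.Km 0)) := by
    intro m m' hmm
    have h0 : ea m = ea m' := sL.inj hmm
    rw [← h1 m, ← h1 m', h0]
  set Dj := LinearMap.range (sL.i ∘ₗ (ea : (Ma : Type u) →ₗ[R] S.Km 0)) with hDj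
  set NY : ModuleCat.{u} R := ModuleCat.of R ((S.Pm (Int.negSucc 0) : Type u) ⧸ Dj) with hNY
  have hps0 : ∀ a, sL.p (sL.i a) = 0 := fun a => (sL.exact _).mpr ⟨a, rfl⟩
  have hexc : Function.Exact (sL.i ∘ₗ (ea : (Ma : Type u) →ₗ[R] S.Km 0)) Dj.mkQ := by
    intro y
    constructor
    · intro h0
      obtain ⟨m, hm⟩ := (Submodule.Quotient.mk_eq_zero Dj).mp h0
      exact ⟨m, hm⟩
    · rintro ⟨m, rfl⟩
      exact (Submodule.Quotient.mk_eq_zero Dj).mpr ⟨m, rfl⟩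
  set ai : (Mb : Type u) →ₗ[R] NY := Dj.mkQ ∘ₗ sL.i ∘ₗ eb with hai
  have haival : ∀ m, ai m = Dj.mkQ (sL.i (eb m)) := fun _ => rfl
  have haiinj : Function.Injective ai := by
    intro m m' hmm
    have h0 : ai (m - m') = 0 := by rw [map_sub, hmm, sub_self]
    rw [haival, Submodule.mkQ_apply, Submodule.Quotient.mk_eq_zero] at h0
    obtain ⟨a, ha⟩ := h0
    have h5 : ea a = eb (m - m') := sL.inj ha
    have h6 : rb (ea a) = rb (eb (m - m')) := by rw [h5]
    rw [h4, h2] at h6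
    rw [← sub_eq_zero, ← h6]
  have hble : Dj ≤ LinearMap.ker sL.p := by
    rintro x ⟨m, rfl⟩
    rw [LinearMap.mem_ker]
    exact hps0 (ea m)
  set bp : (NY : Type u) →ₗ[R] S.Km (Int.negSucc 0) := Dj.liftQ sL.p hble with hbp
  have hbpval : ∀ x, bp (Dj.mkQ x) = sL.p x := fun _ => rfl
  have hbpsurj : Function.Surjective bp := by
    intro k
    obtain ⟨x, hx⟩ := sL.surj k
    exact ⟨Dj.mkQ x, by rw [hbpval, hx]⟩
  refine ⟨NY, S.Pm (Int.negSucc 0), S.projP _,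
    ⟨sL.i ∘ₗ ea, Dj.mkQ, hinj, Dj.mkQ_surjective, hexc⟩,
    ⟨ai, bp, haiinj, hbpsurj, ?_⟩⟩
  intro y
  obtain ⟨x, rfl⟩ := Dj.mkQ_surjective y
  constructor
  · intro h0
    rw [hbpval] at h0
    obtain ⟨k, hk⟩ := (sL.exact _).mp h0
    refine ⟨rb k, ?_⟩
    rw [haival, Submodule.mkQ_apply, Submodule.mkQ_apply, Submodule.Quotient.eq]
    refine ⟨-(ra k), ?_⟩
    show sL.i (ea (-(ra k))) = sL.i (eb (rb k)) - x
    rw [← hk, map_neg, map_neg, ← map_sub]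
    have key : ∀ (a : (Ma : Type u)) (b : (Mb : Type u)) (kk : ↑(S.Km 0)),
        ea a + eb b = kk → -(ea a) = eb b - kk := by
      intro a b kk hk'
      rw [← hk']
      abel
    exact (map_neg sL.i _).symm.trans (congrArg sL.i (key (ra k) (rb k) k (htot k)))
  · rintro ⟨m, hm⟩
    rw [← hm, haival, hbpval, hps0]

/-- State of the rightward (projective resolution) double tower at stage `n`. -/
structure RState (n : ℕ) where
  Z : ModuleCat.{u} R
  Z' : ModuleCat.{u} R
  NZ : ModuleCat.{u} R
  NZ' : ModuleCat.{u} R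
  Pi : ModuleCat.{u} R
  Pi' : ModuleCat.{u} R
  projPi : Module.Projective R (Pi : Type u)
  projPi' : Module.Projective R (Pi' : Type u)
  cover : SESData NZ Pi Z
  cover' : SESData NZ' Pi' Z'
  inv : SESData (S.Km ((n : ℤ) + 1)) NZ Z'
  inv' : SESData (S.Km ((n : ℤ) + 1)) NZ' Z
  goodZ : ∀ Q : ModuleCat.{u} R, QuasiProjective Q → GoodFor Z Q
  goodZ' : ∀ Q : ModuleCat.{u} R, QuasiProjective Q → GoodFor Z' Q

/-- State of the leftward (coresolution) double tower at stage `n`. -/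
structure LState (n : ℕ) where
  Y : ModuleCat.{u} R
  Y' : ModuleCat.{u} R
  NY : ModuleCat.{u} R
  NY' : ModuleCat.{u} R
  Th : ModuleCat.{u} R
  Th' : ModuleCat.{u} R
  projTh : Module.Projective R (Th : Type u)
  projTh' : Module.Projective R (Th' : Type u)
  cov : SESData Y Th NY
  cov' : SESData Y' Th' NY'
  inv : SESData Y' NY (S.Km (Int.negSucc n))
  inv' : SESData Y NY' (S.Km (Int.negSucc n))
  goodY : ∀ Q : ModuleCat.{u} R, QuasiProjective Q → GoodFor Y Q
  goodY' : ∀ Q : ModuleCat.{u} R, QuasiProjective Q → GoodFor Y' Q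

noncomputable def rbase : RState S 0 :=
  let hM := rHalf S S.M S.M' S.eM S.rM S.eM' S.rM' S.hrae S.hrbe S.hrab S.htot
  let hM' := rHalf S S.M' S.M S.eM' S.rM' S.eM S.rM S.hrbe S.hrae S.hrba
    (fun k => by rw [add_comm]; exact S.htot k)
  { Z := S.M
    Z' := S.M'
    NZ := hM.NZ
    NZ' := hM'.NZ
    Pi := hM.Pi
    Pi' := hM'.Pi
    projPi := hM.projPi
    projPi' := hM'.projPi
    cover := hM.cover
    cover' := hM'.cover
    inv := hM.inv
    inv' := hM'.inv
    goodZ := S.goodM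
    goodZ' := S.goodM' }

noncomputable def rstep (n : ℕ) (d : RState S n) : RState S (n + 1) :=
  let o := hsRight d.inv (S.sKP ((n : ℤ) + 1)) d.cover' d.projPi'
  let o' := hsRight d.inv' (S.sKP ((n : ℤ) + 1)) d.cover d.projPi
  { Z := d.NZ
    Z' := d.NZ'
    NZ := o.N
    NZ' := o'.N
    Pi := ModuleCat.of R (↑(S.Pm ((n : ℤ) + 1)) × ↑d.Pi')
    Pi' := ModuleCat.of R (↑(S.Pm ((n : ℤ) + 1)) × ↑d.Pi)
    projPi := by
      haveI := S.projP ((n : ℤ) + 1)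
      haveI := d.projPi'
      exact (inferInstance : Module.Projective R (↑(S.Pm ((n : ℤ) + 1)) × ↑d.Pi'))
    projPi' := by
      haveI := S.projP ((n : ℤ) + 1)
      haveI := d.projPi
      exact (inferInstance : Module.Projective R (↑(S.Pm ((n : ℤ) + 1)) × ↑d.Pi))
    cover := o.main
    cover' := o'.main
    inv := o.ses
    inv' := o'.ses
    goodZ := fun Q hQ =>
      good_ext d.inv.i d.inv.p d.inv.inj d.inv.surj d.inv.exact
        (S.goodK _ Q hQ) (d.goodZ' Q hQ)
    goodZ' := fun Q hQ =>
      good_ext d.inv'.i d.inv'.p d.inv'.inj d.inv'.surj d.inv'.exact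
        (S.goodK _ Q hQ) (d.goodZ Q hQ) }

noncomputable def rdata : ∀ n : ℕ, RState S n :=
  fun n => Nat.rec (rbase S) (fun m d => rstep S m d) n

noncomputable def lbase : LState S 0 :=
  let hM := lHalf S S.M S.M' S.eM S.rM S.eM' S.rM' S.hrae S.hrbe S.hrba S.htot
  let hM' := lHalf S S.M' S.M S.eM' S.rM' S.eM S.rM S.hrbe S.hrae S.hrab
    (fun k => by rw [add_comm]; exact S.htot k)
  { Y := S.M
    Y' := S.M'
    NY := hM.NY
    NY' := hM'.NY
    Th := hM.Th
    Th' := hM'.Th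
    projTh := hM.projTh
    projTh' := hM'.projTh
    cov := hM.cov
    cov' := hM'.cov
    inv := hM.inv
    inv' := hM'.inv
    goodY := S.goodM
    goodY' := S.goodM' }

noncomputable def lstep (n : ℕ) (d : LState S n) : LState S (n + 1) :=
  let u := (good_extend d.inv.i d.inv.p d.inv.inj d.inv.surj d.inv.exact
    (S.goodK (Int.negSucc n) d.Th' (quasiProjective_of_projective d.projTh')) d.cov'.i).choose
  let hu : u ∘ₗ d.inv.i = d.cov'.i := (good_extend d.inv.i d.inv.p d.inv.inj d.inv.surj
    d.inv.exact (S.goodK (Int.negSucc n) d.Th'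
      (quasiProjective_of_projective d.projTh')) d.cov'.i).choose_spec
  let u' := (good_extend d.inv'.i d.inv'.p d.inv'.inj d.inv'.surj d.inv'.exact
    (S.goodK (Int.negSucc n) d.Th (quasiProjective_of_projective d.projTh)) d.cov.i).choose
  let hu' : u' ∘ₗ d.inv'.i = d.cov.i := (good_extend d.inv'.i d.inv'.p d.inv'.inj d.inv'.surj
    d.inv'.exact (S.goodK (Int.negSucc n) d.Th
      (quasiProjective_of_projective d.projTh)) d.cov.i).choose_spec
  let o := hsLeft d.inv d.cov' (S.sKP (Int.negSucc (n + 1))) u hu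
  let o' := hsLeft d.inv' d.cov (S.sKP (Int.negSucc (n + 1))) u' hu'
  { Y := d.NY
    Y' := d.NY'
    NY := o.N
    NY' := o'.N
    Th := ModuleCat.of R (↑d.Th' × ↑(S.Pm (Int.negSucc (n + 1))))
    Th' := ModuleCat.of R (↑d.Th × ↑(S.Pm (Int.negSucc (n + 1))))
    projTh := by
      haveI := S.projP (Int.negSucc (n + 1))
      haveI := d.projTh'
      exact (inferInstance : Module.Projective R (↑d.Th' × ↑(S.Pm (Int.negSucc (n + 1)))))
    projTh' := by
      haveI := S.projP (Int.negSucc (n + 1))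
      haveI := d.projTh
      exact (inferInstance : Module.Projective R (↑d.Th × ↑(S.Pm (Int.negSucc (n + 1)))))
    cov := o.main
    cov' := o'.main
    inv := o.ses
    inv' := o'.ses
    goodY := fun Q hQ =>
      good_ext d.inv.i d.inv.p d.inv.inj d.inv.surj d.inv.exact
        (d.goodY' Q hQ) (S.goodK _ Q hQ)
    goodY' := fun Q hQ =>
      good_ext d.inv'.i d.inv'.p d.inv'.inj d.inv'.surj d.inv'.exact
        (d.goodY Q hQ) (S.goodK _ Q hQ) }

noncomputable def ldata : ∀ n : ℕ, LState S n :=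
  fun n => Nat.rec (lbase S) (fun m d => lstep S m d) n

noncomputable def Kp : ℤ → ModuleCat.{u} R := fun n =>
  match n with
  | .ofNat m => (rdata S m).Z
  | .negSucc k => (ldata S k).NY

noncomputable def Pp : ℤ → ModuleCat.{u} R := fun n =>
  match n with
  | .ofNat m => (rdata S m).Pi
  | .negSucc k => (ldata S k).Th

noncomputable def ιp : ∀ n : ℤ, (Kp S (n + 1) : Type u) →ₗ[R] Pp S n
  | .ofNat m => (rdata S m).cover.i
  | .negSucc 0 => (ldata S 0).cov.i
  | .negSucc (k + 1) => (ldata S (k + 1)).cov.i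

noncomputable def πp : ∀ n : ℤ, (Pp S n : Type u) →ₗ[R] Kp S n
  | .ofNat m => (rdata S m).cover.p
  | .negSucc k => (ldata S k).cov.p

theorem projPp : ∀ n, Module.Projective R (Pp S n : Type u)
  | .ofNat m => (rdata S m).projPi
  | .negSucc k => (ldata S k).projTh

theorem injιp : ∀ n, Function.Injective (ιp S n)
  | .ofNat m => (rdata S m).cover.inj
  | .negSucc 0 => (ldata S 0).cov.inj
  | .negSucc (k + 1) => (ldata S (k + 1)).cov.inj

theorem surjπp : ∀ n, Function.Surjective (πp S n)
  | .ofNat m => (rdata S m).cover.surj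
  | .negSucc k => (ldata S k).cov.surj

theorem exactp : ∀ n, Function.Exact (ιp S n) (πp S n)
  | .ofNat m => (rdata S m).cover.exact
  | .negSucc 0 => (ldata S 0).cov.exact
  | .negSucc (k + 1) => (ldata S (k + 1)).cov.exact

theorem goodKp : ∀ (n : ℤ) (Q : ModuleCat.{u} R), QuasiProjective Q → GoodFor (Kp S n) Q
  | .ofNat m => (rdata S m).goodZ
  | .negSucc k => fun Q hQ =>
      good_ext (ldata S k).inv.i (ldata S k).inv.p (ldata S k).inv.inj
        (ldata S k).inv.surj (ldata S k).inv.exact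
        ((ldata S k).goodY' Q hQ) (S.goodK _ Q hQ)

theorem liftp (n : ℤ) (Q : ModuleCat.{u} R) (hQ : QuasiProjective Q)
    (f : (Kp S (n + 1) : Type u) →ₗ[R] Q) :
    ∃ g : (Pp S n : Type u) →ₗ[R] Q, g ∘ₗ ιp S n = f :=
  good_extend (ιp S n) (πp S n) (injιp S n) (surjπp S n) (exactp S n) (goodKp S n Q hQ) f

/-- The class of quasi-Gorenstein projective modules is closed under direct summands:
if `M ⊕ M'` is quasi-Gorenstein projective, then so is `M`. -/
theorem quasiGorensteinProjective_of_summand (M M' : ModuleCat.{u} R)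
    (h : QuasiGorensteinProjective (M ⊞ M')) : QuasiGorensteinProjective M := by
  obtain ⟨K, P, ι, π, hP, hι, hπ, hex, hlift, ⟨φ⟩⟩ := h
  set eM : (M : Type u) →ₗ[R] K 0 := (biprod.inl ≫ φ.hom : M ⟶ K 0).hom with heM
  set rM : (K 0 : Type u) →ₗ[R] M := (φ.inv ≫ biprod.fst : K 0 ⟶ M).hom with hrM
  set eM' : (M' : Type u) →ₗ[R] K 0 := (biprod.inr ≫ φ.hom : M' ⟶ K 0).hom with heM'
  set rM' : (K 0 : Type u) →ₗ[R] M' := (φ.inv ≫ biprod.snd : K 0 ⟶ M').hom with hrM'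
  have e1 : (biprod.inl ≫ φ.hom) ≫ (φ.inv ≫ biprod.fst) = 𝟙 M := by simp
  have e2 : (biprod.inr ≫ φ.hom) ≫ (φ.inv ≫ biprod.snd) = 𝟙 M' := by simp
  have e3 : (biprod.inr ≫ φ.hom) ≫ (φ.inv ≫ biprod.fst) = 0 := by simp
  have e4 : (biprod.inl ≫ φ.hom) ≫ (φ.inv ≫ biprod.snd) = 0 := by simp
  have e5 : (φ.inv ≫ biprod.fst) ≫ (biprod.inl ≫ φ.hom)
      + (φ.inv ≫ biprod.snd) ≫ (biprod.inr ≫ φ.hom) = 𝟙 (K 0) := by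
    rw [Category.assoc, Category.assoc, ← Preadditive.comp_add,
      ← Category.assoc biprod.fst, ← Category.assoc biprod.snd,
      ← Preadditive.add_comp, biprod.total]
    simp
  have hgoodK : ∀ (n : ℤ) (Q : ModuleCat.{u} R), QuasiProjective Q → GoodFor (K n) Q := by
    intro n Q hQ
    refine good_of_lift (ι n).hom (π n).hom (hP n) (hπ n) (hex n) ?_
    intro f
    obtain ⟨g, hg⟩ := hlift n Q hQ (ModuleCat.ofHom f)
    exact ⟨g.hom, congrArg ModuleCat.Hom.hom hg⟩
  have hrae : ∀ m, rM (eM m) = m := fun m => congrArg (fun (f : M ⟶ M) => f m) e1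
  have hrbe : ∀ m, rM' (eM' m) = m := fun m => congrArg (fun (f : M' ⟶ M') => f m) e2
  have hrab : ∀ m, rM (eM' m) = 0 := fun m => congrArg (fun (f : M' ⟶ M) => f m) e3
  have hrba : ∀ m, rM' (eM m) = 0 := fun m => congrArg (fun (f : M ⟶ M') => f m) e4
  have htot : ∀ k : (K 0 : Type u), eM (rM k) + eM' (rM' k) = k := fun k =>
    congrArg (fun (f : K 0 ⟶ K 0) => f k) e5
  set S' : @GSetup R _ :=
    { M := M
      M' := M'
      Km := K
      Pm := P
      sKP := fun n => ⟨(ι n).hom, (π n).hom, hι n, hπ n, hex n⟩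
      projP := hP
      goodK := hgoodK
      goodM := fun Q hQ => good_retract eM rM (by ext m; exact hrae m) (hgoodK 0 Q hQ)
      goodM' := fun Q hQ => good_retract eM' rM' (by ext m; exact hrbe m) (hgoodK 0 Q hQ)
      eM := eM
      rM := rM
      eM' := eM'
      rM' := rM'
      hrae := hrae
      hrbe := hrbe
      hrab := hrab
      hrba := hrba
      htot := htot } with hS'
  refine ⟨Kp S', Pp S', fun n => ModuleCat.ofHom (ιp S' n), fun n => ModuleCat.ofHom (πp S' n),
    projPp S', injιp S', surjπp S', exactp S', ?_, ?_⟩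
  · intro n Q hQ f
    obtain ⟨g, hg⟩ := liftp S' n Q hQ f.hom
    exact ⟨ModuleCat.ofHom g, ModuleCat.hom_ext hg⟩
  · exact ⟨Iso.refl M⟩
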